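/- Let μ_i > μ_j, σ_i, σ_j > 0, and r_i, r_j > 0. If X̄_i(T) ~ N(μ_i, σ_i²/(r_i T)) and X̄_j(T) ~ N(μ_j, σ_j²/(r_j T)) are independent for each T, then lim_{T→∞} (1/T) log P(X̄_j(T) ≥ X̄_i(T)) = −(μ_i − μ_j)² / (2(σ_i²/r_i + σ_j²/r_j)). -/

import Mathlib

open MeasureTheory ProbabilityTheory Real Filter
open scoped NNReal ENNReal
set_option maxHeartbeats 1000000

lemma gauss_mgf (m : ℝ) (v : ℝ≥0) (hv : v ≠ 0) (θ : ℝ) :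
    ∫⁻ x, ENNReal.ofReal (Real.exp (θ * x)) ∂(gaussianReal m v) =
      ENNReal.ofReal (Real.exp (θ * m + θ ^ 2 * v / 2)) := by
  have hvpos : (0:ℝ) < v := NNReal.coe_pos.mpr (zero_lt_iff.mpr hv)
  rw [gaussianReal_of_var_ne_zero _ hv,
    lintegral_withDensity_eq_lintegral_mul _ (measurable_gaussianPDF _ _)
      (by exact (Real.measurable_exp.comp (measurable_const_mul θ)).ennreal_ofReal)]
  have hpt : (gaussianPDF m v * fun x => ENNReal.ofReal (Real.exp (θ * x)))
      = fun x => ENNReal.ofReal (Real.exp (θ * m + θ ^ 2 * v / 2)) * gaussianPDF (m + θ * v) v x := by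
    funext x
    simp only [Pi.mul_apply, gaussianPDF]
    rw [← ENNReal.ofReal_mul (gaussianPDFReal_nonneg _ _ _),
      ← ENNReal.ofReal_mul (Real.exp_nonneg _)]
    congr 1
    unfold gaussianPDFReal
    have key : (-(x - m) ^ 2 / (2 * (v:ℝ))) + θ * x
        = (θ * m + θ ^ 2 * v / 2) + (-(x - (m + θ * v)) ^ 2 / (2 * v)) := by
      field_simp
      ring
    calc (√(2 * π * (v:ℝ)))⁻¹ * rexp (-(x - m) ^ 2 / (2 * (v:ℝ))) * rexp (θ * x)
        = (√(2 * π * (v:ℝ)))⁻¹ * rexp ((-(x - m) ^ 2 / (2 * (v:ℝ))) + θ * x) := by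
          rw [mul_assoc, Real.exp_add]
      _ = rexp (θ * m + θ ^ 2 * v / 2) * ((√(2 * π * (v:ℝ)))⁻¹ *
            rexp (-(x - (m + θ * v)) ^ 2 / (2 * v))) := by
          rw [key, Real.exp_add]; ring
  rw [hpt, lintegral_const_mul _ (measurable_gaussianPDF _ _),
    lintegral_gaussianPDF_eq_one _ hv, mul_one]

lemma gauss_Icc_lower (m : ℝ) (v : ℝ≥0) (hv : v ≠ 0) {l u K : ℝ} (hlu : l ≤ u)
    (hK : ∀ x ∈ Set.Icc l u, (x - m) ^ 2 ≤ K) :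
    ENNReal.ofReal ((u - l) * ((√(2 * π * v))⁻¹ * rexp (-K / (2 * v)))) ≤
      gaussianReal m v (Set.Icc l u) := by
  have hvpos : (0:ℝ) < v := NNReal.coe_pos.mpr (zero_lt_iff.mpr hv)
  rw [gaussianReal_apply_eq_integral _ hv]
  apply ENNReal.ofReal_le_ofReal
  have hconst : (u - l) * ((√(2 * π * v))⁻¹ * rexp (-K / (2 * v)))
      = ∫ _x in Set.Icc l u, ((√(2 * π * (v:ℝ)))⁻¹ * rexp (-K / (2 * v))) := by
    rw [setIntegral_const, measureReal_def, Real.volume_Icc, ENNReal.toReal_ofReal (by linarith), smul_eq_mul]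
  rw [hconst]
  refine setIntegral_mono_on
    (integrableOn_const (by rw [Real.volume_Icc]; exact ENNReal.ofReal_ne_top))
    ((integrable_gaussianPDFReal m v).integrableOn) measurableSet_Icc ?_
  intro x hx
  unfold gaussianPDFReal
  gcongr (√(2 * π * (v:ℝ)))⁻¹ * rexp (?_ / (2 * (v:ℝ)))
  exact neg_le_neg (hK x hx)

theorem stmt_12 {Ω : Type*} [MeasurableSpace Ω] (P : Measure Ω) [IsProbabilityMeasure P]
    (X Y : ℕ → Ω → ℝ) (μi μj : ℝ) (σi σj ri rj : NNReal)
    (hμ : μj < μi) (hσi : 0 < σi) (hσj : 0 < σj) (hri : 0 < ri) (hrj : 0 < rj)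
    (hX : ∀ T : ℕ, 1 ≤ T → P.map (X T) = gaussianReal μi (σi ^ 2 / (ri * T)))
    (hY : ∀ T : ℕ, 1 ≤ T → P.map (Y T) = gaussianReal μj (σj ^ 2 / (rj * T)))
    (hind : ∀ T : ℕ, IndepFun (X T) (Y T) P) :
    Filter.Tendsto (fun T : ℕ => (1 / (T : ℝ)) * Real.log (P {ω | X T ω ≤ Y T ω}).toReal)
      Filter.atTop
      (nhds (-((μi - μj) ^ 2 /
        (2 * ((σi : ℝ) ^ 2 / (ri : ℝ) + (σj : ℝ) ^ 2 / (rj : ℝ)))))) := by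
  have hσiR : (0:ℝ) < σi := NNReal.coe_pos.mpr hσi
  have hσjR : (0:ℝ) < σj := NNReal.coe_pos.mpr hσj
  have hriR : (0:ℝ) < ri := NNReal.coe_pos.mpr hri
  have hrjR : (0:ℝ) < rj := NNReal.coe_pos.mpr hrj
  set a : ℝ := μi - μj with ha_def
  have ha : 0 < a := sub_pos.mpr hμ
  set vi0 : ℝ := (σi:ℝ) ^ 2 / (ri:ℝ) with hvi0_def
  set vj0 : ℝ := (σj:ℝ) ^ 2 / (rj:ℝ) with hvj0_def
  have hvi0 : 0 < vi0 := by positivity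
  have hvj0 : 0 < vj0 := by positivity
  set s2 : ℝ := vi0 + vj0 with hs2_def
  have hs2 : 0 < s2 := by positivity
  set L : ℝ := -(a ^ 2 / (2 * s2)) with hL_def
  set c : ℝ := (μi * vj0 + μj * vi0) / s2 with hc_def
  set A : ℝ := μi - c with hA_def
  set B : ℝ := c - μj with hB_def
  clear_value A B c L s2 vj0 vi0 a
  have hA_eq : A = a * vi0 / s2 := by
    rw [hA_def, hc_def, ha_def, hs2_def]; field_simp; ring
  have hB_eq : B = a * vj0 / s2 := by
    rw [hB_def, hc_def, ha_def, hs2_def]; field_simp; ring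
  have hA : 0 < A := by rw [hA_eq]; positivity
  have hB : 0 < B := by rw [hB_eq]; positivity
  have hkey : A ^ 2 / (2 * vi0) + B ^ 2 / (2 * vj0) = a ^ 2 / (2 * s2) := by
    rw [hA_eq, hB_eq, hs2_def]; field_simp
  -- coercions of the NNReal variances
  have hvicoe : ∀ T : ℕ, ((σi ^ 2 / (ri * (T:ℝ≥0)) : ℝ≥0) : ℝ) = vi0 / (T:ℝ) := by
    intro T
    rw [hvi0_def, div_div]
    push_cast
    ring_nf
  have hvjcoe : ∀ T : ℕ, ((σj ^ 2 / (rj * (T:ℝ≥0)) : ℝ≥0) : ℝ) = vj0 / (T:ℝ) := by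
    intro T
    rw [hvj0_def, div_div]
    push_cast
    ring_nf
  have hvine : ∀ T : ℕ, 1 ≤ T → (σi ^ 2 / (ri * (T:ℝ≥0)) : ℝ≥0) ≠ 0 := by
    intro T hT h
    have ht : (0:ℝ) < (T:ℝ) := by exact_mod_cast Nat.pos_of_ne_zero (by omega)
    have := hvicoe T
    rw [h] at this
    simp only [NNReal.coe_zero] at this
    have : (0:ℝ) < vi0 / T := by positivity
    linarith [this]
  have hvjne : ∀ T : ℕ, 1 ≤ T → (σj ^ 2 / (rj * (T:ℝ≥0)) : ℝ≥0) ≠ 0 := by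
    intro T hT h
    have ht : (0:ℝ) < (T:ℝ) := by exact_mod_cast Nat.pos_of_ne_zero (by omega)
    have := hvjcoe T
    rw [h] at this
    simp only [NNReal.coe_zero] at this
    have : (0:ℝ) < vj0 / T := by positivity
    linarith [this]
  -- a.e.-measurability of X T and Y T
  have hXae : ∀ T : ℕ, 1 ≤ T → AEMeasurable (X T) P := by
    intro T hT
    by_contra h
    have h1 := hX T hT
    rw [Measure.map_of_not_aemeasurable h] at h1
    have h2 : (gaussianReal μi (σi ^ 2 / (ri * (T:ℝ≥0)))) Set.univ = 1 := measure_univ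
    rw [← h1] at h2
    simp at h2
  have hYae : ∀ T : ℕ, 1 ≤ T → AEMeasurable (Y T) P := by
    intro T hT
    by_contra h
    have h1 := hY T hT
    rw [Measure.map_of_not_aemeasurable h] at h1
    have h2 : (gaussianReal μj (σj ^ 2 / (rj * (T:ℝ≥0)))) Set.univ = 1 := measure_univ
    rw [← h1] at h2
    simp at h2
  -- Chernoff upper bound
  have hub : ∀ T : ℕ, 1 ≤ T →
      P {ω | X T ω ≤ Y T ω} ≤ ENNReal.ofReal (rexp (L * (T:ℝ))) := by
    intro T hT
    have ht : (0:ℝ) < (T:ℝ) := by exact_mod_cast Nat.pos_of_ne_zero (by omega)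
    set θ : ℝ := a * (T:ℝ) / s2 with hθ_def
    clear_value θ
    have hθ : 0 < θ := by rw [hθ_def]; positivity
    have hset : {ω | X T ω ≤ Y T ω} =
        {ω | 1 ≤ ENNReal.ofReal (rexp (θ * Y T ω)) * ENNReal.ofReal (rexp (-θ * X T ω))} := by
      ext ω
      simp only [Set.mem_setOf_eq, ← ENNReal.ofReal_mul (Real.exp_nonneg _), ← Real.exp_add]
      rw [show (1:ℝ≥0∞) = ENNReal.ofReal 1 by simp, ENNReal.ofReal_le_ofReal_iff (Real.exp_nonneg _)]
      rw [Real.one_le_exp_iff]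
      constructor
      · intro h; nlinarith
      · intro h; nlinarith
    have hf1 : AEMeasurable (fun ω => ENNReal.ofReal (rexp (θ * Y T ω))) P :=
      ((Real.measurable_exp.comp (measurable_const_mul θ)).ennreal_ofReal).comp_aemeasurable
        (hYae T hT)
    have hf2 : AEMeasurable (fun ω => ENNReal.ofReal (rexp (-θ * X T ω))) P :=
      ((Real.measurable_exp.comp (measurable_const_mul (-θ))).ennreal_ofReal).comp_aemeasurable
        (hXae T hT)
    have hindep : IndepFun (fun ω => ENNReal.ofReal (rexp (θ * Y T ω)))
        (fun ω => ENNReal.ofReal (rexp (-θ * X T ω))) P :=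
      (hind T).symm.comp
        ((Real.measurable_exp.comp (measurable_const_mul θ)).ennreal_ofReal)
        ((Real.measurable_exp.comp (measurable_const_mul (-θ))).ennreal_ofReal)
    have e1 : ∫⁻ ω, ENNReal.ofReal (rexp (θ * Y T ω)) ∂P
        = ENNReal.ofReal (rexp (θ * μj + θ ^ 2 * ((σj ^ 2 / (rj * (T:ℝ≥0)) : ℝ≥0):ℝ) / 2)) := by
      have hm := lintegral_map' (μ := P) (g := Y T)
        (f := fun y => ENNReal.ofReal (rexp (θ * y)))
        (by exact ((Real.measurable_exp.comp (measurable_const_mul θ)).ennreal_ofReal).aemeasurable)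
        (hYae T hT)
      rw [hY T hT] at hm
      rw [← hm, gauss_mgf _ _ (hvjne T hT) θ]
    have e2 : ∫⁻ ω, ENNReal.ofReal (rexp (-θ * X T ω)) ∂P
        = ENNReal.ofReal (rexp (-θ * μi + (-θ) ^ 2 * ((σi ^ 2 / (ri * (T:ℝ≥0)) : ℝ≥0):ℝ) / 2)) := by
      have hm := lintegral_map' (μ := P) (g := X T)
        (f := fun y => ENNReal.ofReal (rexp (-θ * y)))
        (by exact ((Real.measurable_exp.comp (measurable_const_mul (-θ))).ennreal_ofReal).aemeasurable)
        (hXae T hT)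
      rw [hX T hT] at hm
      rw [← hm, gauss_mgf _ _ (hvine T hT) (-θ)]
    calc P {ω | X T ω ≤ Y T ω}
        ≤ ∫⁻ ω, ENNReal.ofReal (rexp (θ * Y T ω)) * ENNReal.ofReal (rexp (-θ * X T ω)) ∂P := by
          rw [hset]
          have hmark := mul_meas_ge_le_lintegral₀ (hf1.mul hf2) 1
          simp only [Pi.mul_apply, one_mul] at hmark
          exact hmark
      _ = ENNReal.ofReal (rexp (L * (T:ℝ))) := by
          rw [lintegral_mul_eq_lintegral_mul_lintegral_of_indepFun'' hf1 hf2 hindep, e1, e2,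
            ← ENNReal.ofReal_mul (Real.exp_nonneg _), ← Real.exp_add]
          congr 1
          rw [hvicoe T, hvjcoe T, hθ_def, hL_def, ha_def, hs2_def]
          rw [Real.exp_eq_exp]
          have h1 : vi0 + vj0 ≠ 0 := by positivity
          have h2 : (T:ℝ) ≠ 0 := ne_of_gt ht
          field_simp
          ring
  -- lower bound
  have hlow : ∀ T : ℕ, 1 ≤ T →
      rexp ((-Real.log (T:ℝ) - Real.log (√(2*π*(vi0/(T:ℝ)))) - (A + 1/(T:ℝ))^2/(2*(vi0/(T:ℝ)))) +
        (-Real.log (T:ℝ) - Real.log (√(2*π*(vj0/(T:ℝ)))) - (B + 1/(T:ℝ))^2/(2*(vj0/(T:ℝ)))))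
        ≤ (P {ω | X T ω ≤ Y T ω}).toReal := by
    intro T hT
    have ht : (0:ℝ) < (T:ℝ) := by exact_mod_cast Nat.pos_of_ne_zero (by omega)
    have hvit : (0:ℝ) < vi0/(T:ℝ) := by positivity
    have hvjt : (0:ℝ) < vj0/(T:ℝ) := by positivity
    have hsqi : (0:ℝ) < √(2*π*(vi0/(T:ℝ))) := Real.sqrt_pos.mpr (by positivity)
    have hsqj : (0:ℝ) < √(2*π*(vj0/(T:ℝ))) := Real.sqrt_pos.mpr (by positivity)
    have hexp : rexp ((-Real.log (T:ℝ) - Real.log (√(2*π*(vi0/(T:ℝ)))) - (A + 1/(T:ℝ))^2/(2*(vi0/(T:ℝ)))) +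
        (-Real.log (T:ℝ) - Real.log (√(2*π*(vj0/(T:ℝ)))) - (B + 1/(T:ℝ))^2/(2*(vj0/(T:ℝ)))))
        = ((1/(T:ℝ)) * ((√(2*π*(vi0/(T:ℝ))))⁻¹ * rexp (-((A + 1/(T:ℝ))^2 / (2*(vi0/(T:ℝ))))))) *
          ((1/(T:ℝ)) * ((√(2*π*(vj0/(T:ℝ))))⁻¹ * rexp (-((B + 1/(T:ℝ))^2 / (2*(vj0/(T:ℝ))))))) := by
      rw [sub_eq_add_neg, sub_eq_add_neg, sub_eq_add_neg, sub_eq_add_neg, Real.exp_add,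
        Real.exp_add, Real.exp_add, Real.exp_add, Real.exp_add]
      simp only [Real.exp_neg, Real.exp_log ht, Real.exp_log hsqi, Real.exp_log hsqj]
      ring
    have hsub : (X T ⁻¹' Set.Icc (c - 1/(T:ℝ)) c) ∩ (Y T ⁻¹' Set.Icc c (c + 1/(T:ℝ))) ⊆
        {ω | X T ω ≤ Y T ω} := by
      rintro ω ⟨hx, hy⟩
      exact le_trans hx.2 hy.1
    have hmulp := (hind T).measure_inter_preimage_eq_mul (Set.Icc (c - 1/(T:ℝ)) c)
      (Set.Icc c (c + 1/(T:ℝ))) measurableSet_Icc measurableSet_Icc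
    have hXm : P (X T ⁻¹' Set.Icc (c - 1/(T:ℝ)) c)
        = gaussianReal μi (σi^2/(ri*(T:ℝ≥0))) (Set.Icc (c - 1/(T:ℝ)) c) := by
      rw [← hX T hT, Measure.map_apply_of_aemeasurable (hXae T hT) measurableSet_Icc]
    have hYm : P (Y T ⁻¹' Set.Icc c (c + 1/(T:ℝ)))
        = gaussianReal μj (σj^2/(rj*(T:ℝ≥0))) (Set.Icc c (c + 1/(T:ℝ))) := by
      rw [← hY T hT, Measure.map_apply_of_aemeasurable (hYae T hT) measurableSet_Icc]
    have ht1 : (0:ℝ) < 1/(T:ℝ) := by positivity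
    have hgi := gauss_Icc_lower μi (σi^2/(ri*(T:ℝ≥0))) (hvine T hT)
      (l := c - 1/(T:ℝ)) (u := c) (K := (A + 1/(T:ℝ))^2) (by linarith)
      (by
        intro x hx
        have h1 := hx.1
        have h2 := hx.2
        nlinarith [hA])
    have hgj := gauss_Icc_lower μj (σj^2/(rj*(T:ℝ≥0))) (hvjne T hT)
      (l := c) (u := c + 1/(T:ℝ)) (K := (B + 1/(T:ℝ))^2) (by linarith)
      (by
        intro x hx
        have h1 := hx.1
        have h2 := hx.2
        nlinarith [hB])
    rw [hvicoe T] at hgi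
    rw [hvjcoe T] at hgj
    rw [show c - (c - 1/(T:ℝ)) = 1/(T:ℝ) by ring, neg_div] at hgi
    rw [show c + 1/(T:ℝ) - c = 1/(T:ℝ) by ring, neg_div] at hgj
    have hineq : ENNReal.ofReal
        (((1/(T:ℝ)) * ((√(2*π*(vi0/(T:ℝ))))⁻¹ * rexp (-((A + 1/(T:ℝ))^2 / (2*(vi0/(T:ℝ))))))) *
         ((1/(T:ℝ)) * ((√(2*π*(vj0/(T:ℝ))))⁻¹ * rexp (-((B + 1/(T:ℝ))^2 / (2*(vj0/(T:ℝ))))))))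
        ≤ P {ω | X T ω ≤ Y T ω} := by
      rw [ENNReal.ofReal_mul (by positivity)]
      calc ENNReal.ofReal _ * ENNReal.ofReal _
          ≤ P (X T ⁻¹' Set.Icc (c - 1/(T:ℝ)) c) * P (Y T ⁻¹' Set.Icc c (c + 1/(T:ℝ))) := by
            refine mul_le_mul' ?_ ?_
            · rw [hXm]; exact hgi
            · rw [hYm]; exact hgj
        _ = P ((X T ⁻¹' Set.Icc (c - 1/(T:ℝ)) c) ∩ (Y T ⁻¹' Set.Icc c (c + 1/(T:ℝ)))) :=
            hmulp.symm
        _ ≤ P {ω | X T ω ≤ Y T ω} := measure_mono hsub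
    rw [hexp]
    have hmono := ENNReal.toReal_mono (measure_ne_top P _) hineq
    rwa [ENNReal.toReal_ofReal (by positivity)] at hmono
  have hPpos : ∀ T : ℕ, 1 ≤ T → 0 < (P {ω | X T ω ≤ Y T ω}).toReal := fun T hT =>
    lt_of_lt_of_le (Real.exp_pos _) (hlow T hT)
  have hglower : ∀ T : ℕ, 1 ≤ T →
      -(Real.log (T:ℝ)/(T:ℝ)) + (-(Real.log (2*π*vi0) + Real.log (2*π*vj0))/2) * (1/(T:ℝ))
        - (A + 1/(T:ℝ))^2/(2*vi0) - (B + 1/(T:ℝ))^2/(2*vj0)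
      ≤ (1/(T:ℝ)) * Real.log (P {ω | X T ω ≤ Y T ω}).toReal := by
    intro T hT
    have ht : (0:ℝ) < (T:ℝ) := by exact_mod_cast Nat.pos_of_ne_zero (by omega)
    have hlogP : ((-Real.log (T:ℝ) - Real.log (√(2*π*(vi0/(T:ℝ)))) - (A + 1/(T:ℝ))^2/(2*(vi0/(T:ℝ)))) +
        (-Real.log (T:ℝ) - Real.log (√(2*π*(vj0/(T:ℝ)))) - (B + 1/(T:ℝ))^2/(2*(vj0/(T:ℝ)))))
        ≤ Real.log (P {ω | X T ω ≤ Y T ω}).toReal :=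
      (Real.le_log_iff_exp_le (hPpos T hT)).mpr (hlow T hT)
    have heq : -(Real.log (T:ℝ)/(T:ℝ)) + (-(Real.log (2*π*vi0) + Real.log (2*π*vj0))/2) * (1/(T:ℝ))
        - (A + 1/(T:ℝ))^2/(2*vi0) - (B + 1/(T:ℝ))^2/(2*vj0)
        = (1/(T:ℝ)) * ((-Real.log (T:ℝ) - Real.log (√(2*π*(vi0/(T:ℝ)))) - (A + 1/(T:ℝ))^2/(2*(vi0/(T:ℝ)))) +
        (-Real.log (T:ℝ) - Real.log (√(2*π*(vj0/(T:ℝ)))) - (B + 1/(T:ℝ))^2/(2*(vj0/(T:ℝ))))) := by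
      have e1 : 2*π*(vi0/(T:ℝ)) = (2*π*vi0)/(T:ℝ) := by ring
      have e2 : 2*π*(vj0/(T:ℝ)) = (2*π*vj0)/(T:ℝ) := by ring
      rw [Real.log_sqrt (by positivity), Real.log_sqrt (by positivity), e1, e2,
        Real.log_div (by positivity) (ne_of_gt ht), Real.log_div (by positivity) (ne_of_gt ht)]
      field_simp
      ring
    rw [heq]
    exact mul_le_mul_of_nonneg_left hlogP (by positivity)
  have hgupper : ∀ T : ℕ, 1 ≤ T →
      (1/(T:ℝ)) * Real.log (P {ω | X T ω ≤ Y T ω}).toReal ≤ L := by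
    intro T hT
    have ht : (0:ℝ) < (T:ℝ) := by exact_mod_cast Nat.pos_of_ne_zero (by omega)
    have h1 : (P {ω | X T ω ≤ Y T ω}).toReal ≤ rexp (L * (T:ℝ)) := by
      have := ENNReal.toReal_mono ENNReal.ofReal_ne_top (hub T hT)
      rwa [ENNReal.toReal_ofReal (Real.exp_nonneg _)] at this
    have h2 : Real.log (P {ω | X T ω ≤ Y T ω}).toReal ≤ L * (T:ℝ) := by
      rw [← Real.log_exp (L * (T:ℝ))]
      exact Real.log_le_log (hPpos T hT) h1
    calc (1/(T:ℝ)) * Real.log (P {ω | X T ω ≤ Y T ω}).toReal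
        ≤ (1/(T:ℝ)) * (L * (T:ℝ)) := mul_le_mul_of_nonneg_left h2 (by positivity)
      _ = L := by field_simp
  have hlogt : Tendsto (fun T : ℕ => Real.log (T:ℝ)/(T:ℝ)) atTop (nhds 0) :=
    (Real.isLittleO_log_id_atTop.tendsto_div_nhds_zero).comp tendsto_natCast_atTop_atTop
  have h1t : Tendsto (fun T : ℕ => 1/(T:ℝ)) atTop (nhds 0) := tendsto_one_div_atTop_nhds_zero_nat
  have hAl : Tendsto (fun T : ℕ => (A + 1/(T:ℝ))^2/(2*vi0)) atTop (nhds (A^2/(2*vi0))) := by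
    have h := (((tendsto_const_nhds (x := A) (f := atTop)).add h1t).pow 2).div_const (2*vi0)
    simpa using h
  have hBl : Tendsto (fun T : ℕ => (B + 1/(T:ℝ))^2/(2*vj0)) atTop (nhds (B^2/(2*vj0))) := by
    have h := (((tendsto_const_nhds (x := B) (f := atTop)).add h1t).pow 2).div_const (2*vj0)
    simpa using h
  have hg : Tendsto (fun T : ℕ =>
      -(Real.log (T:ℝ)/(T:ℝ)) + (-(Real.log (2*π*vi0) + Real.log (2*π*vj0))/2) * (1/(T:ℝ))
        - (A + 1/(T:ℝ))^2/(2*vi0) - (B + 1/(T:ℝ))^2/(2*vj0)) atTop (nhds L) := by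
    have h := ((hlogt.neg.add ((tendsto_const_nhds
        (x := -(Real.log (2*π*vi0) + Real.log (2*π*vj0))/2) (f := atTop)).mul h1t)).sub hAl).sub hBl
    have hval : L = -(0:ℝ) + (-(Real.log (2*π*vi0) + Real.log (2*π*vj0))/2) * 0
        - A^2/(2*vi0) - B^2/(2*vj0) := by
      rw [hL_def, ← hkey]; ring
    rw [hval]
    exact h
  refine tendsto_of_tendsto_of_tendsto_of_le_of_le' hg tendsto_const_nhds ?_ ?_
  · filter_upwards [eventually_ge_atTop 1] with T hT
    exact hglower T hT
  · filter_upwards [eventually_ge_atTop 1] with T hT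
    exact hgupper T hT
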